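/- Let J ≥ 2 be an integer and let φ₁, …, φ_J be real numbers; set the partial sums φ̃_j = φ₁ + ⋯ + φ_j for 1 ≤ j ≤ J. Assume |φ₁| ≥ 1 and |φ̃_j| ≥ 2(2j+2)³ · max(|φ̃_{j−1}|, |φ₁|) for every 2 ≤ j ≤ J. Then ∏_{j=1}^{J} φ̃_j² ≥ φ₁² · ∏_{j=2}^{J} (2j)³ |φ_j|. -/

import Mathlib

open scoped BigOperators

/-- Product lower bound on the cumulative phases in the iterated normal form
reduction: if `φ̃_j = φ₁ + ⋯ + φ_j`, `|φ₁| ≥ 1` and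
`|φ̃_j| ≥ 2(2j+2)³ max(|φ̃_{j−1}|, |φ₁|)` for `2 ≤ j ≤ J`, then
`∏_{j=1}^J φ̃_j² ≥ φ₁² ∏_{j=2}^J (2j)³|φ_j|`. -/
theorem cumulative_phase_product_lower_bound (J : ℕ) (hJ : 2 ≤ J)
    (φ φt : ℕ → ℝ) (hφt : ∀ j, φt j = ∑ k ∈ Finset.Icc 1 j, φ k)
    (h1 : 1 ≤ |φ 1|)
    (h2 : ∀ j, 2 ≤ j → j ≤ J →
      2 * (2 * (j : ℝ) + 2) ^ 3 * max |φt (j - 1)| |φ 1| ≤ |φt j|) :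
    (φ 1) ^ 2 * ∏ j ∈ Finset.Icc 2 J, ((2 * (j : ℝ)) ^ 3 * |φ j|)
      ≤ ∏ j ∈ Finset.Icc 1 J, (φt j) ^ 2 := by
  have hφt1 : φt 1 = φ 1 := by simp [hφt 1]
  have key : ∀ j ∈ Finset.Icc 2 J, (2 * (j : ℝ)) ^ 3 * |φ j| ≤ (φt j) ^ 2 := by
    intro j hj
    rw [Finset.mem_Icc] at hj
    obtain ⟨hj2, hjJ⟩ := hj
    have h2j := h2 j hj2 hjJ
    set M : ℝ := max |φt (j - 1)| |φ 1| with hM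
    have hM1 : (1:ℝ) ≤ M := le_trans h1 (le_max_right _ _)
    have hMa : |φt (j - 1)| ≤ M := le_max_left _ _
    have hjR : (2:ℝ) ≤ (j : ℝ) := by exact_mod_cast hj2
    have hsplit : φt j = φt (j - 1) + φ j := by
      have hj1 : j - 1 + 1 = j := by omega
      have := Finset.sum_Icc_succ_top (a := 1) (b := j - 1) (by omega) φ
      rw [hj1] at this
      rw [hφt j, hφt (j - 1), this]
    have habs : |φ j| ≤ |φt j| + |φt (j - 1)| := by
      have : φ j = φt j - φt (j - 1) := by linarith
      rw [this]
      exact abs_sub _ _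
    set x : ℝ := |φt j| with hx
    have hx0 : 0 ≤ x := abs_nonneg _
    have hc : (2:ℝ) * (2 * (j : ℝ) + 2) ^ 3 * M ≤ x := h2j
    have hcube : (2 * (j : ℝ)) ^ 3 ≤ (2 * (j : ℝ) + 2) ^ 3 := by
      apply pow_le_pow_left₀ (by linarith) (by linarith)
    have hc0 : (0:ℝ) ≤ 2 * (2 * (j : ℝ) + 2) ^ 3 := by positivity
    have hc1 : (1:ℝ) ≤ 2 * (2 * (j : ℝ) + 2) ^ 3 := by nlinarith
    have hcM : 2 * (2 * (j : ℝ) + 2) ^ 3 ≤ 2 * (2 * (j : ℝ) + 2) ^ 3 * M := by nlinarith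
    have hcx : 2 * (2 * (j : ℝ) + 2) ^ 3 ≤ x := le_trans hcM hc
    have hMx : M ≤ x := by nlinarith
    have hax : |φt (j - 1)| ≤ x := le_trans hMa hMx
    have hx2 : x ^ 2 ≤ (φt j) ^ 2 := by rw [hx, sq_abs]
    have s1 : |φ j| ≤ 2 * x := by linarith
    have s2 : (2 * (j : ℝ)) ^ 3 * |φ j| ≤ (2 * (j : ℝ) + 2) ^ 3 * (2 * x) :=
      mul_le_mul hcube s1 (abs_nonneg _) (by positivity)
    have s4 : 2 * (2 * (j : ℝ) + 2) ^ 3 * x ≤ x * x :=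
      mul_le_mul_of_nonneg_right hcx hx0
    nlinarith
  have hins : Finset.Icc 1 J = insert 1 (Finset.Icc 2 J) := by
    ext x
    simp only [Finset.mem_Icc, Finset.mem_insert]
    omega
  rw [hins, Finset.prod_insert (by simp), hφt1]
  apply mul_le_mul_of_nonneg_left _ (sq_nonneg _)
  exact Finset.prod_le_prod (fun j _ => by positivity) key
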